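/- The discriminant of f̃ equals 16(λ1²−λ2²)(λ1²−λ3²)(λ2²−λ4²)(λ3²−λ4²) and is strictly positive; the quadratic f̃ has two distinct real roots α1 < α2 which satisfy 0 < α1 < α2 ≤ 1; moreover α2 = 1 if and only if λ1² + λ4² = λ2² + λ3². -/

import Mathlib

set_option maxHeartbeats 1600000

/-- the discriminant of `f̃` equals
`16(λ1²−λ2²)(λ1²−λ3²)(λ2²−λ4²)(λ3²−λ4²) > 0`; `f̃` has exactly two real roots
`α1 < α2` with `0 < α1 < α2 ≤ 1`, and `α2 = 1 ↔ λ1² + λ4² = λ2² + λ3²`. -/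
theorem ftilde_roots
    (l1 l2 l3 l4 : ℝ) (h12 : l2 < l1) (h23 : l3 < l2) (h34 : l4 < l3)
    (s12 : 0 < l1 + l2) (s13 : 0 < l1 + l3) (s14 : 0 < l1 + l4)
    (s23 : 0 < l2 + l3) (s24 : 0 < l2 + l4) (s34 : 0 < l3 + l4)
    (St Tt Ut : ℝ)
    (hSt : St = (l1^2 - l4^2)^2)
    (hTt : Tt = -(2 * ((l1^2 - l2^2) * (l3^2 - l4^2) + (l1^2 - l3^2) * (l2^2 - l4^2))))
    (hUt : Ut = (l2^2 - l3^2)^2) :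
    Tt ^ 2 - 4 * St * Ut
        = 16 * (l1^2 - l2^2) * (l1^2 - l3^2) * (l2^2 - l4^2) * (l3^2 - l4^2) ∧
    0 < Tt ^ 2 - 4 * St * Ut ∧
    ∃ α1 α2 : ℝ, α1 < α2 ∧
      (∀ t : ℝ, St * t ^ 2 + Tt * t + Ut = 0 ↔ t = α1 ∨ t = α2) ∧
      0 < α1 ∧ α2 ≤ 1 ∧ (α2 = 1 ↔ l1 ^ 2 + l4 ^ 2 = l2 ^ 2 + l3 ^ 2) := by
  have ha : (0:ℝ) < l1^2 - l2^2 := by nlinarith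
  have hb : (0:ℝ) < l1^2 - l3^2 := by nlinarith
  have hc : (0:ℝ) < l2^2 - l4^2 := by nlinarith
  have hd : (0:ℝ) < l3^2 - l4^2 := by nlinarith
  have he : (0:ℝ) < l2^2 - l3^2 := by nlinarith
  have h14 : (0:ℝ) < l1^2 - l4^2 := by nlinarith
  have hS : 0 < St := by rw [hSt]; exact pow_pos h14 2
  have hU : 0 < Ut := by rw [hUt]; exact pow_pos he 2
  have hTneg : Tt < 0 := by
    rw [hTt]; nlinarith [mul_pos ha hd, mul_pos hb hc]
  have hdisc : Tt ^ 2 - 4 * St * Ut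
      = 16 * (l1^2 - l2^2) * (l1^2 - l3^2) * (l2^2 - l4^2) * (l3^2 - l4^2) := by
    subst hSt hTt hUt; ring
  have hdpos : 0 < Tt ^ 2 - 4 * St * Ut := by
    rw [hdisc]
    nlinarith [mul_pos (mul_pos (mul_pos ha hb) hc) hd]
  have hVpos : 0 < 2 * St + Tt := by
    have hV : 2 * St + Tt = 2 * ((l1^2 - l2^2)^2 + (l3^2 - l4^2)^2
        + (l1^2 - l2^2) * (l2^2 - l3^2)
        + (l3^2 - l4^2) * (l2^2 - l3^2)) := by
      rw [hSt, hTt]; ring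
    rw [hV]
    linarith [mul_pos ha he, mul_pos hd he, mul_pos ha ha, mul_pos hd hd]
  obtain ⟨w, hwdef⟩ : ∃ x : ℝ, x = l1^2 + l4^2 - l2^2 - l3^2 := ⟨_, rfl⟩
  have hw : St + Tt + Ut = w ^ 2 := by rw [hwdef]; subst hSt hTt hUt; ring
  have hiff : w = 0 ↔ l1 ^ 2 + l4 ^ 2 = l2 ^ 2 + l3 ^ 2 := by
    rw [hwdef]; constructor <;> intro h <;> linarith
  refine ⟨hdisc, hdpos, ?_⟩
  clear hdisc ha hb hc hd he h14 h12 h23 h34 s12 s13 s14 s23 s24 s34 hSt hTt hUt hwdef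
  obtain ⟨D, hDdef⟩ : ∃ x : ℝ, x = Real.sqrt (Tt ^ 2 - 4 * St * Ut) := ⟨_, rfl⟩
  have hD2 : D ^ 2 = Tt ^ 2 - 4 * St * Ut := by rw [hDdef]; exact Real.sq_sqrt hdpos.le
  have hDpos : 0 < D := by rw [hDdef]; exact Real.sqrt_pos.mpr hdpos
  have h2S : (0:ℝ) < 2 * St := by linarith
  obtain ⟨A, hA⟩ : ∃ x : ℝ, x = (-Tt - D) / (2 * St) := ⟨_, rfl⟩
  obtain ⟨B, hB⟩ : ∃ x : ℝ, x = (-Tt + D) / (2 * St) := ⟨_, rfl⟩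
  have h1 : 2 * St * A = -Tt - D := by rw [hA]; field_simp
  have h2 : 2 * St * B = -Tt + D := by rw [hB]; field_simp
  have hsum : St * (A + B) = -Tt := by linarith
  have hprod : St * (A * B) = Ut := by
    have h3 : (2 * St * A) * (2 * St * B) = Tt ^ 2 - D ^ 2 := by rw [h1, h2]; ring
    have h4 : 4 * St * (St * (A * B) - Ut) = 0 := by linear_combination h3 - hD2
    have h5 : St * (A * B) - Ut = 0 := by
      rcases mul_eq_zero.mp h4 with h | h
      · linarith
      · exact h
    linarith
  refine ⟨A, B, ?_, ?_, ?_, ?_, ?_⟩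
  · have h6 : 2 * St * A < 2 * St * B := by rw [h1, h2]; linarith
    exact lt_of_mul_lt_mul_left (by linarith [h6]) h2S.le
  · intro t
    have key : St * t ^ 2 + Tt * t + Ut = St * (t - A) * (t - B) := by
      linear_combination t * hsum - hprod
    rw [key]
    constructor
    · intro h
      rcases mul_eq_zero.mp h with h' | h'
      · rcases mul_eq_zero.mp h' with h'' | h''
        · exact absurd h'' hS.ne'
        · exact Or.inl (by linarith [sub_eq_zero.mp h''])
      · exact Or.inr (by linarith [sub_eq_zero.mp h'])
    · rintro (rfl | rfl) <;> ring
  · rw [hA]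
    apply div_pos _ h2S
    nlinarith [mul_pos hS hU, hD2, hDpos]
  · rw [hB, div_le_one h2S]
    nlinarith [hD2, hw, mul_nonneg hS.le (sq_nonneg w), hDpos, hVpos]
  · rw [← hiff]
    constructor
    · intro h
      rw [hB, div_eq_one_iff_eq h2S.ne'] at h
      have hDeq : D = 2 * St + Tt := by linarith
      have hz : w ^ 2 = 0 := by
        have h6 := hD2
        rw [hDeq] at h6
        nlinarith [hw, hS]
      exact (pow_eq_zero_iff two_ne_zero).mp hz
    · intro h
      have hdd : Tt ^ 2 - 4 * St * Ut = (2 * St + Tt) ^ 2 := by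
        linear_combination (-4 * St) * hw + (-4 * St * w) * h
      have hDeq : D = 2 * St + Tt := by
        rw [hDdef, hdd, Real.sqrt_sq hVpos.le]
      rw [hB, hDeq]
      field_simp
      ring
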